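/- When there are only two products, no social network is ∀w-vulnerable: for every Nash equilibrium s of the game on S and every expansion S' of S (adding one product to one node's product set), there exists a finite improvement path in the game on S' starting from s that ends in a Nash equilibrium s' such that s' is not weakly worse than s (i.e., it is not the case that every player's payoff weakly decreases and some player's payoff strictly decreases). -/

import Mathlib

open scoped Classical
noncomputable section

/-- A social network: weighted directed graph, product assignment, thresholds. -/
structure SN (V P : Type) [Fintype V] where
  /-- `E j i` : there is an edge from `j` to `i` (so `j` is a neighbour of `i`). -/
  E : V → V → Prop
  /-- `w j i` is the weight of the edge from `j` to `i`. -/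
  w : V → V → ℝ
  /-- The product set of each node (nonempty). -/
  Pr : V → Set P
  /-- Threshold function. -/
  theta : V → P → ℝ
  PrNe : ∀ i, (Pr i).Nonempty
  wNonneg : ∀ j i, 0 ≤ w j i
  wLeOne : ∀ j i, w j i ≤ 1
  wSumLeOne : ∀ i, (∑ j ∈ Finset.univ.filter (fun j => E j i), w j i) ≤ 1
  thetaPos : ∀ i t, 0 < theta i t
  thetaLeOne : ∀ i t, theta i t ≤ 1

namespace SN

variable {V P : Type} [Fintype V]

/-- A source node has no in-neighbours. -/
def isSource (N : SN V P) (i : V) : Prop := ∀ j, ¬ N.E j i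

/-- A joint strategy is valid if every chosen product belongs to the player's product set
(`none` is the abstention strategy `t₀`). -/
def valid (N : SN V P) (s : V → Option P) : Prop :=
  ∀ i t, s i = some t → t ∈ N.Pr i

/-- `a` is an admissible strategy for player `i`. -/
def validMove (N : SN V P) (i : V) (a : Option P) : Prop :=
  ∀ t, a = some t → t ∈ N.Pr i

/-- The payoff of player `i` in the social network game (with constant `c0` for sources). -/
def payoff (N : SN V P) (c0 : ℝ) (s : V → Option P) (i : V) : ℝ :=
  match s i with
  | none => 0
  | some t =>
    if N.isSource i then c0
    else (∑ j ∈ Finset.univ.filter (fun j => N.E j i ∧ s j = some t), N.w j i) - N.theta i t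

/-- Nash equilibrium of the social network game. -/
def Nash [DecidableEq V] (N : SN V P) (c0 : ℝ) (s : V → Option P) : Prop :=
  N.valid s ∧ ∀ i a, N.validMove i a →
    N.payoff c0 (Function.update s i a) i ≤ N.payoff c0 s i

/-- A profitable deviation from `s` to `s'`. -/
def profDev [DecidableEq V] (N : SN V P) (c0 : ℝ) (s s' : V → Option P) : Prop :=
  ∃ i a, N.validMove i a ∧ s' = Function.update s i a ∧
    N.payoff c0 s i < N.payoff c0 s' i

/-- A finite improvement path from `s` to `s'` (a sequence of profitable deviations). -/
def impPath [DecidableEq V] (N : SN V P) (c0 : ℝ) (s s' : V → Option P) : Prop :=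
  ∃ k, ∃ σ : Fin (k+1) → (V → Option P), σ 0 = s ∧ σ (Fin.last k) = s' ∧
    ∀ m : Fin k, N.profDev c0 (σ m.castSucc) (σ m.succ)

/-- `N'` results from `N` by adding product `t` to the product set of node `i`. -/
def expansionAt (N N' : SN V P) (i : V) (t : P) : Prop :=
  N'.E = N.E ∧ N'.w = N.w ∧ N'.theta = N.theta ∧ t ∉ N.Pr i ∧
  N'.Pr = Function.update N.Pr i (insert t (N.Pr i)) ∧ ∀ j, j ≠ i → N'.Pr j = N.Pr j

/-- `N'` is an expansion of `N`. -/
def expansion (N N' : SN V P) : Prop := ∃ i t, expansionAt N N' i t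

/-- `N'` results from `N` by removing product `t` from the product set of node `i`. -/
def contractionAt (N N' : SN V P) (i : V) (t : P) : Prop :=
  N'.E = N.E ∧ N'.w = N.w ∧ N'.theta = N.theta ∧ t ∈ N.Pr i ∧
  N'.Pr = Function.update N.Pr i (N.Pr i \ {t})

/-- The underlying graph is the simple cycle `0 → 1 → ⋯ → (n-1) → 0`. -/
def simpleCycle {n : ℕ} [NeZero n] (N : SN (Fin n) P) : Prop :=
  ∀ j i, N.E j i ↔ i = j + 1

end SN


open Function Finset

namespace SNProof

set_option linter.unusedSectionVars false

variable {V P : Type} [Fintype V] [DecidableEq V]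

lemma payoff_congr (N N' : SN V P) (hE : N'.E = N.E) (hw : N'.w = N.w)
    (hth : N'.theta = N.theta) (c0 : ℝ) (s : V → Option P) (j : V) :
    N'.payoff c0 s j = N.payoff c0 s j := by
  unfold SN.payoff SN.isSource
  cases s j with
  | none => rfl
  | some x => rw [hE, hw, hth]

lemma payoff_none (N : SN V P) (c0 : ℝ) {s : V → Option P} {j : V} (h : s j = none) :
    N.payoff c0 s j = 0 := by
  unfold SN.payoff; rw [h]

lemma payoff_update_none (N : SN V P) (c0 : ℝ) (s : V → Option P) (j : V) :
    N.payoff c0 (update s j none) j = 0 :=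
  payoff_none N c0 (update_self j none s)

/-- Monotonicity of the payoff in the set of supporting neighbours. -/
lemma payoff_mono (N : SN V P) (c0 : ℝ) {s s' : V → Option P} {j : V} {x : P}
    (hj : s j = some x) (hj' : s' j = some x)
    (hmono : ∀ k, s k = some x → s' k = some x) :
    N.payoff c0 s j ≤ N.payoff c0 s' j := by
  unfold SN.payoff
  rw [hj, hj']
  dsimp only
  by_cases hsrc : N.isSource j
  · rw [if_pos hsrc, if_pos hsrc]
  · rw [if_neg hsrc, if_neg hsrc]
    apply sub_le_sub_right
    apply Finset.sum_le_sum_of_subset_of_nonneg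
    · intro k hk
      simp only [Finset.mem_filter, Finset.mem_univ, true_and] at hk ⊢
      exact ⟨hk.1, hmono k hk.2⟩
    · intro k _ _; exact N.wNonneg k j

/-- Monotonicity of deviation payoffs. -/
lemma dev_mono (N : SN V P) (c0 : ℝ) {s s' : V → Option P} (x : P) (j : V)
    (hmono : ∀ k, s k = some x → s' k = some x) :
    N.payoff c0 (update s j (some x)) j ≤ N.payoff c0 (update s' j (some x)) j := by
  apply payoff_mono N c0 (update_self j (some x) s) (update_self j (some x) s')
  intro k hk
  by_cases hkj : k = j
  · subst hkj; exact update_self k (some x) s'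
  · rw [update_of_ne hkj] at hk ⊢; exact hmono k hk

lemma impPath_refl (N : SN V P) (c0 : ℝ) (s : V → Option P) : N.impPath c0 s s :=
  ⟨0, fun _ => s, rfl, rfl, fun m => m.elim0⟩

lemma impPath_head (N : SN V P) (c0 : ℝ) {s s1 s' : V → Option P}
    (h : N.profDev c0 s s1) (hp : N.impPath c0 s1 s') : N.impPath c0 s s' := by
  obtain ⟨k, σ, h0, hl, hstep⟩ := hp
  refine ⟨k + 1, Fin.cons s σ, rfl, ?_, ?_⟩
  · rw [← Fin.succ_last, Fin.cons_succ]; exact hl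
  · intro m
    induction m using Fin.cases with
    | zero =>
      rw [Fin.cons_succ, Fin.castSucc_zero, Fin.cons_zero, h0]
      exact h
    | succ m' =>
      rw [← Fin.succ_castSucc, Fin.cons_succ, Fin.cons_succ]
      exact hstep m'

lemma impPath_of_rtg (N : SN V P) (c0 : ℝ) {s s' : V → Option P}
    (h : Relation.ReflTransGen (N.profDev c0) s s') : N.impPath c0 s s' := by
  induction h using Relation.ReflTransGen.head_induction_on with
  | refl => exact impPath_refl N c0 s'
  | head hab _ ih => exact impPath_head N c0 hab ih

/-- Rank of a strategy: the `u`-like product 0, abstention 1, `t` 2. -/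
def rk (t : P) : Option P → ℕ
  | none => 1
  | some x => if x = t then 2 else 0

lemma rk_le_two (t : P) (a : Option P) : rk t a ≤ 2 := by
  cases a with
  | none => norm_num [rk]
  | some x => by_cases h : x = t <;> simp [rk, h]

def mu (t : P) (s : V → Option P) : ℕ := ∑ j, (2 - rk t (s j))

lemma mu_update_lt (t : P) (s : V → Option P) (k : V) (a : Option P)
    (h : rk t (s k) < rk t a) : mu t (update s k a) < mu t s := by
  unfold mu
  have hfun : (fun j => 2 - rk t (update s k a j)) =
      update (fun j => 2 - rk t (s j)) k (2 - rk t a) := by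
    funext j
    by_cases hj : j = k
    · subst hj; rw [update_self, update_self]
    · rw [update_of_ne hj, update_of_ne hj]
  rw [hfun, Finset.sum_update_of_mem (Finset.mem_univ k),
    ← Finset.sum_erase_add _ _ (Finset.mem_univ k), Finset.erase_eq]
  have h2 : rk t a ≤ 2 := rk_le_two t a
  omega

lemma single_le_mu (t : P) (s : V → Option P) (k : V) :
    2 - rk t (s k) ≤ mu t s := by
  unfold mu
  exact Finset.single_le_sum (f := fun j => 2 - rk t (s j))
    (fun j _ => Nat.zero_le _) (Finset.mem_univ k)

/-- If no player profits from abstaining and none from switching to `t`, then under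
the invariants the profile is a Nash equilibrium. -/
lemma no_step_case (N' : SN V P) (c0 : ℝ) (t u : P)
    (hall : ∀ x : P, x = t ∨ x = u) (s : V → Option P)
    (hA : N'.valid s)
    (hC : ∀ j, s j = some t → u ∈ N'.Pr j →
      N'.payoff c0 (update s j (some u)) j ≤ N'.payoff c0 s j)
    (hD : ∀ j, s j = none → u ∈ N'.Pr j →
      N'.payoff c0 (update s j (some u)) j ≤ 0)
    (h1 : ∀ k, 0 ≤ N'.payoff c0 s k)
    (h2 : ∀ k, t ∈ N'.Pr k →
      N'.payoff c0 (update s k (some t)) k ≤ N'.payoff c0 s k) :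
    N'.Nash c0 s := by
  refine ⟨hA, ?_⟩
  intro j a hvm
  cases a with
  | none => rw [payoff_update_none]; exact h1 j
  | some x =>
    rcases hall x with rfl | rfl
    · exact h2 j (hvm x rfl)
    · cases hsj : s j with
      | none =>
        rw [payoff_none N' c0 hsj]
        exact hD j hsj (hvm x rfl)
      | some y =>
        rcases hall y with rfl | rfl
        · exact hC j hsj (hvm x rfl)
        · have heq : update s j (some y) = s := by rw [← hsj, update_eq_self]
          rw [heq]

/-- The invariant-driven construction of an improvement path ending in a
Nash equilibrium, keeping player `i` on product `t` with high payoff. -/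
lemma key (N' : SN V P) (c0 : ℝ) (t u : P)
    (hall : ∀ x : P, x = t ∨ x = u) (htu : t ≠ u) (i : V) (p0 : ℝ) :
    ∀ n (s : V → Option P), mu t s ≤ n →
    N'.valid s →
    (∀ j, s j = some t → 0 ≤ N'.payoff c0 s j) →
    (∀ j, s j = some t → u ∈ N'.Pr j →
      N'.payoff c0 (update s j (some u)) j ≤ N'.payoff c0 s j) →
    (∀ j, s j = none → u ∈ N'.Pr j →
      N'.payoff c0 (update s j (some u)) j ≤ 0) →
    s i = some t → p0 < N'.payoff c0 s i →
    ∃ s', Relation.ReflTransGen (N'.profDev c0) s s' ∧ N'.Nash c0 s' ∧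
      p0 < N'.payoff c0 s' i := by
  intro n
  induction n with
  | zero =>
    intro s hmu hA hB hC hD hFi hFp
    refine ⟨s, Relation.ReflTransGen.refl,
      no_step_case N' c0 t u hall s hA hC hD ?_ ?_, hFp⟩
    · intro k
      by_contra hneg
      push_neg at hneg
      have hsk : s k = some u := by
        cases hsk : s k with
        | none => rw [payoff_none N' c0 hsk] at hneg; linarith
        | some x =>
          rcases hall x with rfl | rfl
          · have := hB k hsk; linarith
          · rfl
      have hrk : rk t (s k) = 0 := by
        rw [hsk]; simp [rk, if_neg (Ne.symm htu)]
      have hle := single_le_mu t s k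
      omega
    · intro k hk
      by_contra hlt
      push_neg at hlt
      have hne : s k ≠ some t := by
        intro he
        rw [← he, update_eq_self] at hlt
        exact lt_irrefl _ hlt
      have hrk : rk t (s k) < 2 := by
        cases hsk : s k with
        | none => simp [rk]
        | some x =>
          have hx : x ≠ t := fun h => hne (by rw [hsk, h])
          simp [rk, if_neg hx]
      have hle := single_le_mu t s k
      omega
  | succ n ih =>
    intro s hmu hA hB hC hD hFi hFp
    by_cases h1 : ∃ k, N'.payoff c0 s k < 0
    · obtain ⟨k, hk⟩ := h1
      have hsk : s k = some u := by
        cases hsk : s k with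
        | none => rw [payoff_none N' c0 hsk] at hk; linarith
        | some x =>
          rcases hall x with rfl | rfl
          · have := hB k hsk; linarith
          · rfl
      have hvm : N'.validMove k none := fun x hx => by cases hx
      have hdev : N'.profDev c0 s (update s k none) := by
        refine ⟨k, none, hvm, rfl, ?_⟩
        rw [payoff_update_none]; exact hk
      have htgrow : ∀ m, s m = some t → update s k none m = some t := by
        intro m hm
        have hmk : m ≠ k := fun h => by
          rw [h, hsk] at hm; exact htu (Option.some.inj hm).symm
        rw [update_of_ne hmk]; exact hm
      have hushrink : ∀ m, update s k none m = some u → s m = some u := by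
        intro m hm
        by_cases hmk : m = k
        · subst hmk; rw [update_self] at hm; cases hm
        · rw [update_of_ne hmk] at hm; exact hm
      have hs1t : ∀ m, update s k none m = some t → s m = some t := by
        intro m hm
        by_cases hmk : m = k
        · subst hmk; rw [update_self] at hm; cases hm
        · rw [update_of_ne hmk] at hm; exact hm
      have hmono : ∀ j, s j = some t →
          N'.payoff c0 s j ≤ N'.payoff c0 (update s k none) j := by
        intro j hj
        exact payoff_mono N' c0 hj (htgrow j hj) htgrow
      have hmu1 : mu t (update s k none) ≤ n := by
        have hlt : mu t (update s k none) < mu t s := by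
          apply mu_update_lt
          rw [hsk]
          simp [rk, if_neg (Ne.symm htu)]
        omega
      obtain ⟨s', hrtg, hnash, hpi⟩ := ih (update s k none) hmu1
        (fun j x hj => by
          by_cases hjk : j = k
          · subst hjk; rw [update_self] at hj; cases hj
          · rw [update_of_ne hjk] at hj; exact hA j x hj)
        (fun j hj => le_trans (hB j (hs1t j hj)) (hmono j (hs1t j hj)))
        (fun j hj hu =>
          le_trans (dev_mono N' c0 u j hushrink)
            (le_trans (hC j (hs1t j hj) hu) (hmono j (hs1t j hj))))
        (fun j hj hu => by
          by_cases hjk : j = k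
          · subst hjk
            have heq : update (update s j none) j (some u) = s := by
              rw [update_idem, ← hsk, update_eq_self]
            rw [heq]
            exact le_of_lt hk
          · rw [update_of_ne hjk] at hj
            exact le_trans (dev_mono N' c0 u j hushrink) (hD j hj hu))
        (htgrow i hFi) (lt_of_lt_of_le hFp (hmono i hFi))
      exact ⟨s', Relation.ReflTransGen.head hdev hrtg, hnash, hpi⟩
    · push_neg at h1
      by_cases h2 : ∃ k, t ∈ N'.Pr k ∧
          N'.payoff c0 s k < N'.payoff c0 (update s k (some t)) k
      · obtain ⟨k, hkt, hk⟩ := h2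
        have hne : s k ≠ some t := by
          intro he
          rw [← he, update_eq_self] at hk
          exact lt_irrefl _ hk
        have hvm : N'.validMove k (some t) := fun x hx => (Option.some.inj hx) ▸ hkt
        have hdev : N'.profDev c0 s (update s k (some t)) := ⟨k, some t, hvm, rfl, hk⟩
        have htgrow : ∀ m, s m = some t → update s k (some t) m = some t := by
          intro m hm
          by_cases hmk : m = k
          · subst hmk; rw [update_self]
          · rw [update_of_ne hmk]; exact hm
        have hushrink : ∀ m, update s k (some t) m = some u → s m = some u := by
          intro m hm
          by_cases hmk : m = k
          · subst hmk; rw [update_self] at hm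
            exact absurd (Option.some.inj hm) htu
          · rw [update_of_ne hmk] at hm; exact hm
        have hmono : ∀ j, s j = some t →
            N'.payoff c0 s j ≤ N'.payoff c0 (update s k (some t)) j := by
          intro j hj
          exact payoff_mono N' c0 hj (htgrow j hj) htgrow
        have hmu1 : mu t (update s k (some t)) ≤ n := by
          have hlt : mu t (update s k (some t)) < mu t s := by
            apply mu_update_lt
            have h2' : rk t (some t) = 2 := by simp [rk]
            rw [h2']
            cases hsk : s k with
            | none => simp [rk]
            | some x =>
              have hx : x ≠ t := fun h => hne (by rw [hsk, h])
              simp [rk, if_neg hx]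
          omega
        obtain ⟨s', hrtg, hnash, hpi⟩ := ih (update s k (some t)) hmu1
          (fun j x hj => by
            by_cases hjk : j = k
            · subst hjk; rw [update_self] at hj
              rw [← Option.some.inj hj]; exact hkt
            · rw [update_of_ne hjk] at hj; exact hA j x hj)
          (fun j hj => by
            by_cases hjk : j = k
            · subst hjk; exact le_of_lt (lt_of_le_of_lt (h1 j) hk)
            · rw [update_of_ne hjk] at hj
              exact le_trans (hB j hj) (hmono j hj))
          (fun j hj hu => by
            by_cases hjk : j = k
            · subst hjk
              have heq : update (update s j (some t)) j (some u) =
                  update s j (some u) := by rw [update_idem]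
              rw [heq]
              cases hsj : s j with
              | none =>
                calc N'.payoff c0 (update s j (some u)) j ≤ 0 := hD j hsj hu
                  _ ≤ N'.payoff c0 s j := h1 j
                  _ ≤ N'.payoff c0 (update s j (some t)) j := le_of_lt hk
              | some x =>
                rcases hall x with rfl | rfl
                · exact absurd hsj hne
                · have heq2 : update s j (some x) = s := by
                    rw [← hsj, update_eq_self]
                  rw [heq2]
                  exact le_of_lt hk
            · rw [update_of_ne hjk] at hj
              exact le_trans (dev_mono N' c0 u j hushrink)
                (le_trans (hC j hj hu) (hmono j hj)))
          (fun j hj hu => by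
            have hjk : j ≠ k := by
              intro he; rw [he, update_self] at hj; cases hj
            rw [update_of_ne hjk] at hj
            exact le_trans (dev_mono N' c0 u j hushrink) (hD j hj hu))
          (htgrow i hFi) (lt_of_lt_of_le hFp (hmono i hFi))
        exact ⟨s', Relation.ReflTransGen.head hdev hrtg, hnash, hpi⟩
      · push_neg at h2
        exact ⟨s, Relation.ReflTransGen.refl,
          no_step_case N' c0 t u hall s hA hC hD h1 h2, hFp⟩

end SNProof

open Function SNProof in
/-- with only two products, no social network is ∀w-vulnerable: for every
Nash equilibrium `s` of `G(S)` and every expansion `S'`, some finite improvement path in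
`G(S')` starting from `s` ends in a Nash equilibrium `s'` that is not weakly worse
than `s`. -/
theorem stmt4 {V P : Type} [Fintype V] [DecidableEq V] (N N' : SN V P)
    (t1 t2 : P) (hP : ∀ t : P, t = t1 ∨ t = t2)
    (c0 : ℝ) (hc0 : 0 < c0)
    (s : V → Option P) (hs : N.Nash c0 s) (hexp : N.expansion N') :
    ∃ s', N'.impPath c0 s s' ∧ N'.Nash c0 s' ∧
      ¬ ((∀ i, N'.payoff c0 s' i ≤ N.payoff c0 s i) ∧
         ∃ i, N'.payoff c0 s' i < N.payoff c0 s i) := by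
  classical
  obtain ⟨i, t, hE, hw, hth, htn, hPrU, hPrne⟩ := hexp
  have hpay : ∀ (σ : V → Option P) (j : V), N'.payoff c0 σ j = N.payoff c0 σ j :=
    fun σ j => payoff_congr N N' hE hw hth c0 σ j
  have hPri : N'.Pr i = insert t (N.Pr i) := by
    rw [hPrU]
    exact @Function.update_self V (fun _ => Set P)
      (fun a b => Classical.propDecidable (a = b)) i (insert t (N.Pr i)) N.Pr
  obtain ⟨u, hu⟩ := N.PrNe i
  have hut : u ≠ t := fun h => htn (h ▸ hu)
  have hall : ∀ x : P, x = t ∨ x = u := by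
    rcases hP t with rfl | rfl
    · rcases hP u with h | rfl
      · exact absurd h hut
      · exact hP
    · rcases hP u with rfl | h
      · exact fun x => (hP x).symm
      · exact absurd h hut
  have hvalid' : N'.valid s := by
    intro j x hj
    by_cases hji : j = i
    · subst hji; rw [hPri]; exact Set.mem_insert_of_mem _ (hs.1 j x hj)
    · rw [hPrne j hji]; exact hs.1 j x hj
  have hnonneg : ∀ j, 0 ≤ N.payoff c0 s j := by
    intro j
    have h := hs.2 j none (fun x hx => by cases hx)
    rw [payoff_update_none] at h
    exact h
  by_cases hN : N'.Nash c0 s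
  · refine ⟨s, impPath_refl N' c0 s, hN, ?_⟩
    rintro ⟨hle, j, hlt⟩
    rw [hpay] at hlt
    exact lt_irrefl _ hlt
  · have hnotall : ¬ ∀ j a, N'.validMove j a →
        N'.payoff c0 (Function.update s j a) j ≤ N'.payoff c0 s j :=
      fun h => hN ⟨hvalid', h⟩
    push_neg at hnotall
    obtain ⟨j, a, hvm, hlt⟩ := hnotall
    have hnotN : ¬ N.validMove j a := by
      intro hvmN
      have h := hs.2 j a hvmN
      rw [hpay, hpay] at hlt
      linarith
    unfold SN.validMove at hnotN
    push_neg at hnotN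
    obtain ⟨x, hax, hx⟩ := hnotN
    have hji : j = i := by
      by_contra hne
      have hmem := hvm x hax
      rw [hPrne j hne] at hmem
      exact hx hmem
    subst hji
    have hxt : x = t := by
      have hmem := hvm x hax
      rw [hPri] at hmem
      rcases Set.mem_insert_iff.mp hmem with h | h
      · exact h
      · exact absurd h hx
    rw [hxt] at hax
    subst hax
    -- hlt : N'.payoff c0 s j < N'.payoff c0 (update s j (some t)) j, with j = i
    have htgrow01 : ∀ m, s m = some t → Function.update s j (some t) m = some t := by
      intro m hm
      by_cases hmj : m = j
      · subst hmj; exact update_self m _ _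
      · rw [update_of_ne hmj]; exact hm
    have hushrink01 : ∀ m, Function.update s j (some t) m = some u → s m = some u := by
      intro m hm
      by_cases hmj : m = j
      · subst hmj; rw [update_self] at hm
        exact absurd (Option.some.inj hm).symm hut
      · rw [update_of_ne hmj] at hm; exact hm
    have hmono01 : ∀ m, s m = some t →
        N'.payoff c0 s m ≤ N'.payoff c0 (Function.update s j (some t)) m := by
      intro m hm
      exact payoff_mono N' c0 hm (htgrow01 m hm) htgrow01
    have hA1 : N'.valid (Function.update s j (some t)) := by
      intro m y hm
      by_cases hmj : m = j
      · subst hmj; rw [update_self] at hm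
        rw [← Option.some.inj hm, hPri]
        exact Set.mem_insert t _
      · rw [update_of_ne hmj] at hm; exact hvalid' m y hm
    have hB1 : ∀ m, Function.update s j (some t) m = some t →
        0 ≤ N'.payoff c0 (Function.update s j (some t)) m := by
      intro m hm
      by_cases hmj : m = j
      · subst hmj
        refine le_of_lt (lt_of_le_of_lt ?_ hlt)
        rw [hpay]; exact hnonneg m
      · rw [update_of_ne hmj] at hm
        refine le_trans ?_ (hmono01 m hm)
        rw [hpay]; exact hnonneg m
    have hC1 : ∀ m, Function.update s j (some t) m = some t → u ∈ N'.Pr m →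
        N'.payoff c0 (Function.update (Function.update s j (some t)) m (some u)) m ≤
          N'.payoff c0 (Function.update s j (some t)) m := by
      intro m hm hum
      by_cases hmj : m = j
      · subst hmj
        have heq : Function.update (Function.update s m (some t)) m (some u) =
            Function.update s m (some u) := by rw [update_idem]
        rw [heq]
        have hvmu : N.validMove m (some u) := fun y hy => (Option.some.inj hy) ▸ hu
        calc N'.payoff c0 (Function.update s m (some u)) m
            = N.payoff c0 (Function.update s m (some u)) m := hpay _ _
          _ ≤ N.payoff c0 s m := hs.2 m (some u) hvmu
          _ = N'.payoff c0 s m := (hpay _ _).symm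
          _ ≤ N'.payoff c0 (Function.update s m (some t)) m := le_of_lt hlt
      · rw [update_of_ne hmj] at hm
        have hum' : u ∈ N.Pr m := by rw [← hPrne m hmj]; exact hum
        have hvmu : N.validMove m (some u) := fun y hy => (Option.some.inj hy) ▸ hum'
        calc N'.payoff c0 (Function.update (Function.update s j (some t)) m (some u)) m
            ≤ N'.payoff c0 (Function.update s m (some u)) m :=
              dev_mono N' c0 u m hushrink01
          _ = N.payoff c0 (Function.update s m (some u)) m := hpay _ _
          _ ≤ N.payoff c0 s m := hs.2 m (some u) hvmu
          _ = N'.payoff c0 s m := (hpay _ _).symm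
          _ ≤ N'.payoff c0 (Function.update s j (some t)) m := hmono01 m hm
    have hD1 : ∀ m, Function.update s j (some t) m = none → u ∈ N'.Pr m →
        N'.payoff c0 (Function.update (Function.update s j (some t)) m (some u)) m ≤ 0 := by
      intro m hm hum
      have hmj : m ≠ j := by
        intro he; rw [he, update_self] at hm; cases hm
      rw [update_of_ne hmj] at hm
      have hum' : u ∈ N.Pr m := by rw [← hPrne m hmj]; exact hum
      have hvmu : N.validMove m (some u) := fun y hy => (Option.some.inj hy) ▸ hum'
      calc N'.payoff c0 (Function.update (Function.update s j (some t)) m (some u)) m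
          ≤ N'.payoff c0 (Function.update s m (some u)) m := dev_mono N' c0 u m hushrink01
        _ = N.payoff c0 (Function.update s m (some u)) m := hpay _ _
        _ ≤ N.payoff c0 s m := hs.2 m (some u) hvmu
        _ = 0 := payoff_none N c0 hm
    have hFi1 : Function.update s j (some t) j = some t := update_self j _ _
    have hFp1 : N.payoff c0 s j < N'.payoff c0 (Function.update s j (some t)) j := by
      rw [← hpay]; exact hlt
    obtain ⟨s', hrtg, hnash, hpi⟩ :=
      key N' c0 t u hall (fun h => hut h.symm) j (N.payoff c0 s j)
        (mu t (Function.update s j (some t))) (Function.update s j (some t))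
        le_rfl hA1 hB1 hC1 hD1 hFi1 hFp1
    have hdev : N'.profDev c0 s (Function.update s j (some t)) :=
      ⟨j, some t, hvm, rfl, hlt⟩
    refine ⟨s', impPath_of_rtg N' c0 (Relation.ReflTransGen.head hdev hrtg), hnash, ?_⟩
    rintro ⟨hle, -⟩
    exact absurd (hle j) (not_le_of_gt hpi)
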